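/- Every good independence system is 2-extendible: if I is an independence system such that all its t-minors are bit-concave (equivalently, I is good), then for all X, Y ∈ I and y ∈ Y∖X there exists Z ⊆ X∖Y with |Z| ≤ 2 and (X ∪ {y})∖Z ∈ I. -/

import Mathlib

/-- A bit-function: all weights are integer powers of `2`. -/
def IsBitFunction {E : Type*} (w : E → ℝ) : Prop := ∀ e, ∃ ℓ : ℤ, w e = 2 ^ ℓ

/-- An independence system `I` is bit-concave if for every bit-function `w` the map
`k ↦ OPT_k = max{w(S) : S ∈ I, |S| ≤ k}` is concave. -/
def BitConcave {E : Type*} (I : Finset E → Prop) : Prop :=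
  ∀ w : E → ℝ, IsBitFunction w → ∀ OPT : ℕ → ℝ,
    (∀ k, IsGreatest {x : ℝ | ∃ S : Finset E, I S ∧ S.card ≤ k ∧ x = ∑ e ∈ S, w e}
      (OPT k)) →
    ∀ k, OPT k + OPT (k + 2) ≤ 2 * OPT (k + 1)

/-- `TMinor I J`: `J` is a truncation-minor of `I`, obtained by iterated deletions,
contractions, and truncations. -/
inductive TMinor {E : Type*} [DecidableEq E] :
    (Finset E → Prop) → (Finset E → Prop) → Prop
  | refl (I : Finset E → Prop) : TMinor I I
  | deletion {I J : Finset E → Prop} (X : Finset E) :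
      TMinor I J → TMinor I (fun S => J S ∧ S ∩ X = ∅)
  | contraction {I J : Finset E → Prop} (X : Finset E) (hX : J X) :
      TMinor I J → TMinor I (fun S => S ∩ X = ∅ ∧ J (S ∪ X))
  | truncation {I J : Finset E → Prop} (t : ℕ) :
      TMinor I J → TMinor I (fun S => J S ∧ S.card ≤ t)

/-- Every good independence system (one all of whose t-minors are bit-concave)
is 2-extendible. -/
theorem stmt_11 {E : Type*} [Fintype E] [DecidableEq E]
    (I : Finset E → Prop) (hne : I ∅) (hdc : ∀ S T : Finset E, S ⊆ T → I T → I S)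
    (hgood : ∀ J : Finset E → Prop, TMinor I J → BitConcave J) :
    ∀ X Y : Finset E, I X → I Y → ∀ y ∈ Y \ X,
      ∃ Z ⊆ X \ Y, Z.card ≤ 2 ∧ I (insert y X \ Z) := by
  classical
  intro X Y hX hY y hy
  rw [Finset.mem_sdiff] at hy
  obtain ⟨hyY, hyX⟩ := hy
  set A := X \ Y with hAdef
  set C := X ∩ Y with hCdef
  have hAX : A ⊆ X := Finset.sdiff_subset
  have hCX : C ⊆ X := Finset.inter_subset_left
  have hCY : C ⊆ Y := Finset.inter_subset_right
  have hyA : y ∉ A := fun h => hyX (hAX h)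
  have hyC : y ∉ C := fun h => hyX (hCX h)
  have hIC : I C := hdc C X hCX hX
  have hIyC : I (insert y C) := hdc _ Y (Finset.insert_subset hyY hCY) hY
  by_cases hsmall : A.card ≤ 2
  · refine ⟨A, Finset.Subset.refl _, hsmall, ?_⟩
    apply hdc _ Y _ hY
    intro e he
    simp only [Finset.mem_sdiff, Finset.mem_insert, hAdef] at he
    obtain ⟨h1 | h1, h2⟩ := he
    · rwa [h1]
    · by_contra heY
      exact h2 ⟨h1, heY⟩
  push_neg at hsmall
  by_contra hcon
  push_neg at hcon
  -- hcon : ∀ Z ⊆ X \ Y, Z.card ≤ 2 → ¬I (insert y X \ Z)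
  set n := A.card with hndef
  -- the family of subsets of A that remain independent together with insert y C
  set F := A.powerset.filter (fun S => I (S ∪ insert y C)) with hFdef
  have hFne : F.Nonempty := by
    refine ⟨∅, ?_⟩
    simp only [hFdef, Finset.mem_filter, Finset.mem_powerset]
    exact ⟨Finset.empty_subset _, by simpa using hIyC⟩
  obtain ⟨Smax, hSmaxF, hSmaxMax⟩ := F.exists_max_image Finset.card hFne
  rw [hFdef, Finset.mem_filter, Finset.mem_powerset] at hSmaxF
  obtain ⟨hSmaxA, hISmax⟩ := hSmaxF
  set r := Smax.card with hrdef
  have hmax : ∀ S ⊆ A, I (S ∪ insert y C) → S.card ≤ r := by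
    intro S hSA hSI
    exact hSmaxMax S (by
      rw [hFdef, Finset.mem_filter, Finset.mem_powerset]; exact ⟨hSA, hSI⟩)
  -- key set identity
  have hSeq : insert y X \ (A \ Smax) = Smax ∪ insert y C := by
    ext e
    by_cases hey : e = y
    · subst hey
      simp [hyX, hyA, hyC]
    · have hs : e ∈ Smax → e ∈ X ∧ e ∉ Y := fun h => by
        have := hSmaxA h; rw [hAdef, Finset.mem_sdiff] at this; exact this
      simp only [Finset.mem_sdiff, Finset.mem_insert, Finset.mem_union, hAdef, hCdef,
        Finset.mem_inter, hey, false_or]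
      tauto
  have hr3 : r + 3 ≤ n := by
    by_contra hcon2
    push_neg at hcon2
    have hZsub : A \ Smax ⊆ X \ Y := by rw [← hAdef]; exact Finset.sdiff_subset
    have hZcard : (A \ Smax).card ≤ 2 := by
      rw [Finset.card_sdiff_of_subset hSmaxA]
      omega
    exact hcon (A \ Smax) hZsub hZcard (hSeq ▸ hISmax)
  -- the minor
  set D : Finset E := Finset.univ \ insert y A with hDdef
  have hminor : TMinor I (fun S => (S ∩ C = ∅ ∧ I (S ∪ C)) ∧ S ∩ D = ∅) :=
    TMinor.deletion D (TMinor.contraction C hIC (TMinor.refl I))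
  have hK : ∀ S : Finset E,
      ((S ∩ C = ∅ ∧ I (S ∪ C)) ∧ S ∩ D = ∅) ↔ (S ⊆ insert y A ∧ I (S ∪ C)) := by
    intro S
    constructor
    · rintro ⟨⟨-, hI2⟩, hD2⟩
      refine ⟨?_, hI2⟩
      intro e he
      by_contra hno
      have : e ∈ S ∩ D := Finset.mem_inter.mpr ⟨he, by simp [hDdef, hno]⟩
      rw [hD2] at this
      exact absurd this (Finset.notMem_empty e)
    · rintro ⟨hsub, hI2⟩
      refine ⟨⟨?_, hI2⟩, ?_⟩
      · rw [Finset.eq_empty_iff_forall_notMem]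
        intro e he
        rw [Finset.mem_inter] at he
        obtain ⟨heS, heC⟩ := he
        rw [hCdef, Finset.mem_inter] at heC
        rcases Finset.mem_insert.mp (hsub heS) with h | h
        · exact hyX (h ▸ heC.1)
        · rw [hAdef, Finset.mem_sdiff] at h
          exact h.2 heC.2
      · rw [Finset.eq_empty_iff_forall_notMem]
        intro e he
        rw [Finset.mem_inter] at he
        have := hsub he.1
        have h2 := he.2
        rw [hDdef, Finset.mem_sdiff] at h2
        exact h2.2 this
  -- weight function
  set w : E → ℝ := fun e => if e = y then 2 else 1 with hwdef
  have hw : IsBitFunction w := by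
    intro e
    by_cases h : e = y
    · exact ⟨1, by simp [hwdef, h]⟩
    · exact ⟨0, by simp [hwdef, h]⟩
  have hsum : ∀ S : Finset E, ∑ e ∈ S, w e = (S.card : ℝ) + (if y ∈ S then 1 else 0) := by
    intro S
    have h1 : ∀ e ∈ S, w e = 1 + (if e = y then (1 : ℝ) else 0) := by
      intro e _
      by_cases h : e = y <;> simp [hwdef, h] <;> norm_num
    rw [Finset.sum_congr rfl h1, Finset.sum_add_distrib, Finset.sum_const, nsmul_eq_mul,
      mul_one, Finset.sum_ite_eq' S y (fun _ => (1 : ℝ))]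
  set N : ℕ → ℕ := fun k => if k = 0 then 0 else max (min k n) (2 + min (k - 1) r) with hNdef
  have hOPT : ∀ k, IsGreatest {x : ℝ | ∃ S : Finset E,
      ((S ∩ C = ∅ ∧ I (S ∪ C)) ∧ S ∩ D = ∅) ∧ S.card ≤ k ∧ x = ∑ e ∈ S, w e}
      ((N k : ℝ)) := by
    intro k
    constructor
    · -- membership: a witness achieving N k
      by_cases hk0 : k = 0
      · subst hk0
        refine ⟨∅, (hK ∅).mpr ⟨Finset.empty_subset _, by simpa using hIC⟩, le_refl _, ?_⟩
        simp [hNdef]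
      · by_cases hab : 2 + min (k - 1) r ≤ min k n
        · obtain ⟨S, hSA, hScard⟩ := Finset.exists_subset_card_eq (s := A) (n := min k n) (min_le_right _ _)
          have hyS : y ∉ S := fun h => hyA (hSA h)
          refine ⟨S, (hK S).mpr ⟨hSA.trans (Finset.subset_insert _ _),
            hdc _ X (Finset.union_subset (hSA.trans hAX) hCX) hX⟩, ?_, ?_⟩
          · rw [hScard]; exact min_le_left _ _
          · rw [hsum, if_neg hyS, hScard]
            have : N k = min k n := by
              rw [hNdef]; simp only [if_neg hk0]
              omega
            rw [this]
            simp
        · push_neg at hab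
          obtain ⟨S', hS'sub, hS'card⟩ :=
            Finset.exists_subset_card_eq (s := Smax) (n := min (k - 1) r) (by rw [hrdef] at *; exact min_le_right _ _)
          have hyS' : y ∉ S' := fun h => hyA (hSmaxA (hS'sub h))
          have hScard : (insert y S').card = min (k - 1) r + 1 := by
            rw [Finset.card_insert_of_notMem hyS', hS'card]
          have hUeq : insert y S' ∪ C = S' ∪ insert y C := by
            rw [Finset.insert_union, Finset.union_insert]
          refine ⟨insert y S', (hK _).mpr ⟨?_, ?_⟩, ?_, ?_⟩
          · exact Finset.insert_subset_insert y (hS'sub.trans hSmaxA)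
          · rw [hUeq]
            exact hdc _ (Smax ∪ insert y C)
              (Finset.union_subset_union hS'sub (Finset.Subset.refl _)) hISmax
          · rw [hScard]; omega
          · rw [hsum, if_pos (Finset.mem_insert_self y S'), hScard]
            have : N k = 2 + min (k - 1) r := by
              rw [hNdef]; simp only [if_neg hk0]
              omega
            rw [this]
            push_cast
            ring
    · -- upper bound
      rintro x ⟨S, hKS, hcard, rfl⟩
      rw [hK] at hKS
      obtain ⟨hsub, hI2⟩ := hKS
      by_cases hyS : y ∈ S
      · have hk1 : 1 ≤ k := le_trans (Finset.card_pos.mpr ⟨y, hyS⟩) hcard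
        set S' := S.erase y with hS'def
        have hS'A : S' ⊆ A := by
          intro e he
          rw [hS'def, Finset.mem_erase] at he
          rcases Finset.mem_insert.mp (hsub he.2) with h | h
          · exact absurd h he.1
          · exact h
        have hUeq : S' ∪ insert y C = S ∪ C := by
          conv_rhs => rw [← Finset.insert_erase hyS]
          rw [Finset.insert_union, Finset.union_insert, ← hS'def]
        have hS'r : S'.card ≤ r := hmax S' hS'A (hUeq ▸ hI2)
        have hS'c : S'.card = S.card - 1 := by
          rw [hS'def, Finset.card_erase_of_mem hyS]
        have hnat : S.card + 1 ≤ N k := by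
          rw [hNdef]; simp only [if_neg (by omega : ¬ k = 0)]
          have h1 : 1 ≤ S.card := Finset.card_pos.mpr ⟨y, hyS⟩
          omega
        rw [hsum, if_pos hyS]
        calc (S.card : ℝ) + 1 = ((S.card + 1 : ℕ) : ℝ) := by push_cast; ring
          _ ≤ (N k : ℝ) := by exact_mod_cast hnat
      · have hSA : S ⊆ A := by
          intro e he
          rcases Finset.mem_insert.mp (hsub he) with h | h
          · exact absurd (h ▸ he) hyS
          · exact h
        have hSn : S.card ≤ n := Finset.card_le_card hSA
        have hnat : S.card ≤ N k := by
          simp only [hNdef]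
          split_ifs with h
          · omega
          · omega
        rw [hsum, if_neg hyS]
        calc (S.card : ℝ) + 0 = ((S.card : ℕ) : ℝ) := by ring
          _ ≤ (N k : ℝ) := by exact_mod_cast hnat
  have hconc := hgood _ hminor w hw (fun k => (N k : ℝ)) hOPT (r + 1)
  have h1 : N (r + 1) = r + 2 := by
    rw [hNdef]; simp only [if_neg (by omega : ¬ r + 1 = 0)]; omega
  have h2 : N (r + 1 + 1) = r + 2 := by
    rw [hNdef]; simp only [if_neg (by omega : ¬ r + 1 + 1 = 0)]; omega
  have h3 : N (r + 1 + 2) = r + 3 := by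
    rw [hNdef]; simp only [if_neg (by omega : ¬ r + 1 + 2 = 0)]; omega
  rw [h1, h2, h3] at hconc
  push_cast at hconc
  linarith
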